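/- Fix n ≥ 1 and let Q(λ) = A_n λⁿ + A_{n−1} λ^{n−1} + ⋯ + A_1 λ + A_0 be a random real polynomial whose n+1 coefficients A_0, …, A_n are i.i.d. standard normal random variables. Then for every k with 0 ≤ k ≤ n, P(N⁻(Q) = k) = P(N⁻(Q) = n − k). -/

import Mathlib

open Polynomial MeasureTheory ProbabilityTheory

/-- The number of complex roots, counted with multiplicity, of a real polynomial
that have negative real part. -/
noncomputable def negRootCount (q : Polynomial ℝ) : ℕ :=
  Multiset.card ((q.map (algebraMap ℝ ℂ)).roots.filter fun z => z.re < 0)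

/-- The random real polynomial `∑_{i=0}^{n} ω_i λ^i` built from coefficients `ω`. -/
noncomputable def polyOfCoeffs {n : ℕ} (ω : Fin (n + 1) → ℝ) : Polynomial ℝ :=
  ∑ i : Fin (n + 1), Polynomial.C (ω i) * Polynomial.X ^ (i : ℕ)

namespace Stmt7

variable {n : ℕ}

lemma natDegree_polyOfCoeffs_le (ω : Fin (n + 1) → ℝ) : (polyOfCoeffs ω).natDegree ≤ n := by
  apply Polynomial.natDegree_sum_le_of_forall_le
  intro i _
  refine (Polynomial.natDegree_C_mul_le _ _).trans ?_
  simpa [Polynomial.natDegree_X_pow] using (Fin.is_le i)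

lemma coeff_polyOfCoeffs (ω : Fin (n + 1) → ℝ) (j : Fin (n + 1)) :
    (polyOfCoeffs ω).coeff (j : ℕ) = ω j := by
  rw [polyOfCoeffs, Polynomial.finset_sum_coeff]
  rw [Finset.sum_eq_single j]
  · simp
  · intro i _ hij
    simp only [Polynomial.coeff_C_mul, Polynomial.coeff_X_pow]
    rw [if_neg, mul_zero]
    exact fun h => hij (Fin.val_injective h.symm)
  · simp

lemma eval_map_polyOfCoeffs (ω : Fin (n + 1) → ℝ) (z : ℂ) :
    ((polyOfCoeffs ω).map (algebraMap ℝ ℂ)).eval z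
      = ∑ i : Fin (n + 1), (ω i : ℂ) * z ^ (i : ℕ) := by
  simp [polyOfCoeffs, Polynomial.map_sum, Polynomial.eval_finset_sum]

end Stmt7

namespace Stmt7

lemma key (ω : Fin (n + 1) → ℝ) (hlead : ω (Fin.last n) ≠ 0)
    (him : ∀ z ∈ ((polyOfCoeffs ω).map (algebraMap ℝ ℂ)).roots, z.re ≠ 0) :
    negRootCount (polyOfCoeffs fun i => (-1 : ℝ) ^ (i : ℕ) * ω i)
        = n - negRootCount (polyOfCoeffs ω)
      ∧ negRootCount (polyOfCoeffs ω) ≤ n := by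
  set q : Polynomial ℂ := (polyOfCoeffs ω).map (algebraMap ℝ ℂ) with hq
  have hcoeffn : q.coeff n = (ω (Fin.last n) : ℂ) := by
    rw [hq, Polynomial.coeff_map]
    have := coeff_polyOfCoeffs ω (Fin.last n)
    simp only [Fin.val_last] at this
    rw [this]; rfl
  have hq0 : q ≠ 0 := fun h => by
    apply hlead
    have : q.coeff n = 0 := by rw [h]; simp
    rw [hcoeffn] at this
    exact_mod_cast this
  have hndeg : q.natDegree = n := by
    apply le_antisymm
    · rw [hq]
      exact Polynomial.natDegree_map_le.trans (natDegree_polyOfCoeffs_le ω)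
    · apply Polynomial.le_natDegree_of_ne_zero
      rw [hcoeffn]
      exact_mod_cast hlead
  have hcard : Multiset.card q.roots = n := by
    rw [← hndeg]
    exact (Polynomial.splits_iff_card_roots).mp (IsAlgClosed.splits q)
  have ha : q.leadingCoeff ≠ 0 := Polynomial.leadingCoeff_ne_zero.mpr hq0
  have hfact : Polynomial.C q.leadingCoeff * (q.roots.map fun z => Polynomial.X - Polynomial.C z).prod = q :=
    Polynomial.C_leadingCoeff_mul_prod_multiset_X_sub_C (hcard.trans hndeg.symm)
  set r : Polynomial ℂ := (polyOfCoeffs fun i => (-1 : ℝ) ^ (i : ℕ) * ω i).map (algebraMap ℝ ℂ) with hrdef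
  have hevalr : ∀ x : ℂ, r.eval x = q.eval (-x) := by
    intro x
    rw [hrdef, hq, eval_map_polyOfCoeffs, eval_map_polyOfCoeffs]
    refine Finset.sum_congr rfl fun i _ => ?_
    push_cast
    rw [neg_pow x]
    ring
  have hr : r = Polynomial.C ((-1) ^ n * q.leadingCoeff)
      * ((q.roots.map Neg.neg).map fun z => Polynomial.X - Polynomial.C z).prod := by
    apply Polynomial.funext
    intro x
    rw [hevalr]
    conv_lhs => rw [← hfact]
    rw [Polynomial.eval_mul, Polynomial.eval_mul, Polynomial.eval_C, Polynomial.eval_C,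
      Polynomial.eval_multiset_prod, Polynomial.eval_multiset_prod]
    have e1 : (Multiset.map (Polynomial.eval (-x)) (Multiset.map (fun z => Polynomial.X - Polynomial.C z) q.roots))
        = Multiset.map (fun z => -(x + z)) q.roots := by
      rw [Multiset.map_map]
      refine Multiset.map_congr rfl fun z _ => ?_
      simp; ring
    have e2 : (Multiset.map (Polynomial.eval x) (Multiset.map (fun z => Polynomial.X - Polynomial.C z) (Multiset.map Neg.neg q.roots)))
        = Multiset.map (fun z => x + z) q.roots := by
      rw [Multiset.map_map, Multiset.map_map]
      refine Multiset.map_congr rfl fun z _ => ?_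
      simp
    rw [e1, e2]
    have e3 : Multiset.map (fun z => -(x + z)) q.roots
        = Multiset.map Neg.neg (Multiset.map (fun z => x + z) q.roots) := by
      rw [Multiset.map_map]; rfl
    rw [e3, Multiset.prod_map_neg, Multiset.card_map, hcard]
    ring
  have hrroots : r.roots = q.roots.map Neg.neg := by
    rw [hr, Polynomial.roots_C_mul, Polynomial.roots_multiset_prod_X_sub_C]
    exact mul_ne_zero (pow_ne_zero _ (by norm_num)) ha
  have hfiltermap : (r.roots.filter fun z => z.re < 0)
      = (q.roots.filter fun z => 0 < z.re).map Neg.neg := by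
    rw [hrroots, Multiset.filter_map]
    congr 1
    refine Multiset.filter_congr fun z _ => ?_
    simp [Function.comp]
  have hsplit : Multiset.card (q.roots.filter fun z => z.re < 0)
      + Multiset.card (q.roots.filter fun z => 0 < z.re) = n := by
    have h := Multiset.filter_add_not (fun z => z.re < 0) q.roots
    have h2 : q.roots.filter (fun z => ¬ z.re < 0) = q.roots.filter fun z => 0 < z.re := by
      refine Multiset.filter_congr fun z hz => ?_
      have := him z hz
      constructor
      · intro h'; rcases lt_or_gt_of_ne this with h'' | h''
        · exact absurd h'' h'
        · exact h''
      · intro h' h''; exact absurd h'' (not_lt.mpr h'.le)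
    rw [h2] at h
    have := congrArg Multiset.card h
    rw [Multiset.card_add, hcard] at this
    exact this
  have hle : negRootCount (polyOfCoeffs ω) ≤ n := by
    rw [negRootCount, ← hq, ← hcard]
    exact Multiset.card_le_card (Multiset.filter_le _ _)
  refine ⟨?_, hle⟩
  rw [negRootCount, ← hrdef, hfiltermap, Multiset.card_map]
  rw [negRootCount, ← hq]
  omega

end Stmt7

namespace Stmt7

lemma gauss_null_of_countable {s : Set ℝ} (hs : s.Countable) : gaussianReal 0 1 s = 0 := by
  rw [gaussianReal_of_var_ne_zero 0 one_ne_zero]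
  exact withDensity_absolutelyContinuous _ _ (hs.measure_zero _)

lemma coord_null (m : ℕ) (i : Fin m) (c : ℝ) :
    (Measure.pi fun _ : Fin m => gaussianReal 0 1) {ω | ω i = c} = 0 := by
  classical
  have h : {ω : Fin m → ℝ | ω i = c}
      = Set.pi Set.univ (fun j => if j = i then ({c} : Set ℝ) else Set.univ) := by
    ext ω
    simp only [Set.mem_setOf_eq, Set.mem_pi, Set.mem_univ, forall_true_left]
    constructor
    · intro h j
      by_cases hj : j = i
      · subst hj; simp [h]
      · simp [hj]
    · intro h
      have := h i
      simpa using this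
  rw [h, Measure.pi_pi]
  apply Finset.prod_eq_zero (Finset.mem_univ i)
  simp [gauss_null_of_countable (Set.countable_singleton c)]

noncomputable def cpoly {n : ℕ} (ω : Fin (n + 1) → ℝ) (y : ℝ) : ℂ :=
  ∑ i : Fin (n + 1), (ω i : ℂ) * (Complex.I * y) ^ (i : ℕ)

lemma continuous_cpoly : Continuous fun p : (Fin (n + 1) → ℝ) × ℝ => cpoly p.1 p.2 := by
  unfold cpoly
  fun_prop

lemma isClosed_Cl (m : ℕ) :
    IsClosed {ω : Fin (n + 1) → ℝ | ∃ y ∈ Set.Icc (-(m : ℝ)) (m : ℝ), cpoly ω y = 0} := by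
  have himg : {ω : Fin (n + 1) → ℝ | ∃ y ∈ Set.Icc (-(m : ℝ)) (m : ℝ), cpoly ω y = 0}
      = Prod.fst '' {p : (Fin (n + 1) → ℝ) × (Set.Icc (-(m : ℝ)) (m : ℝ)) |
          cpoly p.1 (p.2 : ℝ) = 0} := by
    ext ω
    constructor
    · rintro ⟨y, hy, h0⟩
      exact ⟨(ω, ⟨y, hy⟩), h0, rfl⟩
    · rintro ⟨⟨ω', y⟩, h0, rfl⟩
      exact ⟨(y : ℝ), y.2, h0⟩
  rw [himg]
  apply isClosedMap_fst_of_compactSpace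
  exact isClosed_eq (continuous_cpoly.comp
    (continuous_fst.prodMk (continuous_subtype_val.comp continuous_snd))) continuous_const

lemma B2_eq : {ω : Fin (n + 1) → ℝ | ∃ z : ℂ, z.re = 0
      ∧ ((polyOfCoeffs ω).map (algebraMap ℝ ℂ)).eval z = 0}
    = ⋃ m : ℕ, {ω : Fin (n + 1) → ℝ | ∃ y ∈ Set.Icc (-(m : ℝ)) (m : ℝ), cpoly ω y = 0} := by
  ext ω
  simp only [Set.mem_setOf_eq, Set.mem_iUnion]
  constructor
  · rintro ⟨z, hre, h0⟩
    refine ⟨⌈|z.im|⌉₊, z.im, ?_, ?_⟩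
    · rw [Set.mem_Icc]
      have h1 : |z.im| ≤ (⌈|z.im|⌉₊ : ℝ) := Nat.le_ceil _
      rcases abs_le.mp h1 with ⟨h2, h3⟩
      exact ⟨h2, h3⟩
    · have hz : z = Complex.I * (z.im : ℂ) := by
        apply Complex.ext <;> simp [hre]
      rw [cpoly, ← hz]
      rw [eval_map_polyOfCoeffs] at h0
      exact h0
  · rintro ⟨m, y, _, h0⟩
    refine ⟨Complex.I * (y : ℂ), by simp, ?_⟩
    rw [eval_map_polyOfCoeffs]
    exact h0

end Stmt7

namespace Stmt7

noncomputable def Pv {n : ℕ} (v : Fin n → ℝ) : Polynomial ℝ :=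
  ∑ i : Fin n, Polynomial.C (v i * (Complex.I ^ ((i : ℕ) + 1)).im) * Polynomial.X ^ ((i : ℕ) + 1)

lemma Pv_ne_zero {n : ℕ} (hn : 0 < n) (v : Fin n → ℝ) (hv : v ⟨0, hn⟩ ≠ 0) : Pv v ≠ 0 := by
  intro h
  apply hv
  have hc : (Pv v).coeff 1 = v ⟨0, hn⟩ := by
    rw [Pv, Polynomial.finset_sum_coeff]
    rw [Finset.sum_eq_single (⟨0, hn⟩ : Fin n)]
    · simp
    · intro i _ hi
      simp only [Polynomial.coeff_C_mul, Polynomial.coeff_X_pow]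
      rw [if_neg, mul_zero]
      intro hcontra
      apply hi
      have : (i : ℕ) = 0 := by omega
      exact Fin.ext this
    · simp
  rw [h] at hc
  simpa using hc.symm

lemma cpoly_insertNth {n : ℕ} (x : ℝ) (v : Fin n → ℝ) (y : ℝ) :
    cpoly (Fin.insertNth 0 x v) y
      = (x : ℂ) + ∑ i : Fin n,
          ((v i * y ^ ((i : ℕ) + 1) : ℝ) : ℂ) * Complex.I ^ ((i : ℕ) + 1) := by
  have hsucc : ∀ j : Fin n, Fin.insertNth (α := fun _ => ℝ) (0 : Fin (n + 1)) x v j.succ = v j := by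
    intro j
    have h := Fin.insertNth_apply_succAbove (α := fun _ : Fin (n + 1) => ℝ) (i := (0 : Fin (n + 1))) (x := x) (p := v) j
    simpa using h
  rw [cpoly, Fin.sum_univ_succ, Fin.insertNth_apply_same]
  simp only [hsucc, Fin.val_zero, pow_zero, mul_one, Fin.val_succ]
  congr 1
  refine Finset.sum_congr rfl fun i _ => ?_
  push_cast
  ring

lemma fiber_subset {n : ℕ} (x : ℝ) (v : Fin n → ℝ)
    (hx : ∃ y : ℝ, cpoly (Fin.insertNth 0 x v) y = 0) :
    ∃ y : ℝ, (Pv v).IsRoot y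
      ∧ x = -(∑ i : Fin n, v i * (Complex.I ^ ((i : ℕ) + 1)).re * y ^ ((i : ℕ) + 1)) := by
  obtain ⟨y, hy⟩ := hx
  rw [cpoly_insertNth] at hy
  have hre := congrArg Complex.re hy
  have him := congrArg Complex.im hy
  simp only [Complex.add_re, Complex.add_im, Complex.re_sum, Complex.im_sum, Complex.zero_re,
    Complex.zero_im, Complex.ofReal_re, Complex.ofReal_im, Complex.re_ofReal_mul,
    Complex.mul_re, Complex.mul_im] at hre him
  refine ⟨y, ?_, ?_⟩
  · have heval : (Pv v).eval y
        = ∑ i : Fin n, v i * y ^ ((i : ℕ) + 1) * (Complex.I ^ ((i : ℕ) + 1)).im := by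
      rw [Pv]
      rw [Polynomial.eval_finset_sum]
      refine Finset.sum_congr rfl fun i _ => ?_
      simp
      ring
    have him' : ∑ i : Fin n, v i * y ^ ((i : ℕ) + 1) * (Complex.I ^ ((i : ℕ) + 1)).im = 0 := by
      simpa using him
    rw [Polynomial.IsRoot, heval]
    exact him'
  · have hre' : x + ∑ i : Fin n, v i * y ^ ((i : ℕ) + 1) * (Complex.I ^ ((i : ℕ) + 1)).re = 0 := by
      simpa using hre
    have hcomm : ∑ i : Fin n, v i * (Complex.I ^ ((i : ℕ) + 1)).re * y ^ ((i : ℕ) + 1)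
        = ∑ i : Fin n, v i * y ^ ((i : ℕ) + 1) * (Complex.I ^ ((i : ℕ) + 1)).re :=
      Finset.sum_congr rfl fun i _ => by ring
    rw [hcomm]
    linarith

end Stmt7

namespace Stmt7

lemma bad_null {n : ℕ} (hn : 1 ≤ n) :
    (Measure.pi fun _ : Fin (n + 1) => gaussianReal 0 1)
      {ω : Fin (n + 1) → ℝ | ∃ z : ℂ, z.re = 0
        ∧ ((polyOfCoeffs ω).map (algebraMap ℝ ℂ)).eval z = 0} = 0 := by
  set μ := (Measure.pi fun _ : Fin (n + 1) => gaussianReal 0 1) with hμ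
  set B2 := {ω : Fin (n + 1) → ℝ | ∃ z : ℂ, z.re = 0
        ∧ ((polyOfCoeffs ω).map (algebraMap ℝ ℂ)).eval z = 0} with hB2
  have hB2' : B2 = {ω : Fin (n + 1) → ℝ | ∃ y : ℝ, cpoly ω y = 0} := by
    rw [hB2, B2_eq]
    ext ω
    simp only [Set.mem_iUnion, Set.mem_setOf_eq]
    constructor
    · rintro ⟨m, y, _, h⟩; exact ⟨y, h⟩
    · rintro ⟨y, h⟩
      refine ⟨⌈|y|⌉₊, y, ?_, h⟩
      rw [Set.mem_Icc]
      rcases abs_le.mp (Nat.le_ceil |y|) with ⟨h1, h2⟩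
      exact ⟨h1, h2⟩
  have hB2meas : MeasurableSet B2 := by
    rw [hB2, B2_eq]
    exact MeasurableSet.iUnion fun m => (isClosed_Cl m).measurableSet
  set e := MeasurableEquiv.piFinSuccAbove (fun _ : Fin (n + 1) => ℝ) 0 with he
  have hmp := measurePreserving_piFinSuccAbove (fun _ : Fin (n + 1) => gaussianReal 0 1) 0
  set ν := (Measure.pi fun _ : Fin n => gaussianReal 0 1) with hν
  have heq : μ B2 = ((gaussianReal 0 1).prod ν) (e.symm ⁻¹' B2) := by
    have h := hmp.measure_preimage_equiv (e.symm ⁻¹' B2)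
    have h2 : e ⁻¹' (e.symm ⁻¹' B2) = B2 := by
      ext ω; simp
    rw [h2] at h
    rw [hμ]
    exact h
  rw [heq, Measure.prod_apply_symm (e.symm.measurable hB2meas)]
  have hae : ∀ᵐ v ∂ν, gaussianReal 0 1 ((fun x => (x, v)) ⁻¹' (e.symm ⁻¹' B2)) = 0 := by
    have hco : ν {v : Fin n → ℝ | v ⟨0, hn⟩ = 0} = 0 := coord_null n ⟨0, hn⟩ 0
    have h0 : ∀ᵐ v ∂ν, v ⟨0, hn⟩ ≠ 0 := by
      rw [ae_iff]
      simpa using hco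
    filter_upwards [h0] with v hv
    have hsub : ((fun x => (x, v)) ⁻¹' (e.symm ⁻¹' B2)) ⊆
        (fun y => -(∑ i : Fin n, v i * (Complex.I ^ ((i : ℕ) + 1)).re * y ^ ((i : ℕ) + 1))) ''
          {y : ℝ | (Pv v).IsRoot y} := by
      intro x hx
      simp only [Set.mem_preimage, hB2'] at hx
      have hx' : ∃ y : ℝ, cpoly (Fin.insertNth 0 x v) y = 0 := by
        have hes : e.symm (x, v) = Fin.insertNth 0 x v := rfl
        rwa [hes] at hx
      obtain ⟨y, hy1, hy2⟩ := fiber_subset x v hx'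
      exact ⟨y, hy1, hy2.symm⟩
    refine measure_mono_null hsub ?_
    apply gauss_null_of_countable
    exact (((Polynomial.finite_setOf_isRoot (Pv_ne_zero hn v hv)).image _)).countable
  rw [lintegral_congr_ae hae]
  simp

end Stmt7

namespace Stmt7

noncomputable def sgnEquiv {n : ℕ} : (Fin (n + 1) → ℝ) ≃ᵐ (Fin (n + 1) → ℝ) :=
  MeasurableEquiv.piCongrRight fun i =>
    (Homeomorph.mulLeft₀ ((-1 : ℝ) ^ (i : ℕ))
      (pow_ne_zero _ (by norm_num))).toMeasurableEquiv

lemma sgnEquiv_apply {n : ℕ} (ω : Fin (n + 1) → ℝ) :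
    sgnEquiv ω = fun i : Fin (n + 1) => (-1 : ℝ) ^ (i : ℕ) * ω i := rfl

lemma sgn_mp {n : ℕ} :
    MeasurePreserving (⇑(sgnEquiv (n := n)))
      (Measure.pi fun _ : Fin (n + 1) => gaussianReal 0 1)
      (Measure.pi fun _ : Fin (n + 1) => gaussianReal 0 1) := by
  have hcoord : ∀ i : Fin (n + 1),
      MeasurePreserving (fun x : ℝ => (-1 : ℝ) ^ (i : ℕ) * x)
        (gaussianReal 0 1) (gaussianReal 0 1) := by
    intro i
    refine ⟨(measurable_id.const_mul _), ?_⟩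
    have h := gaussianReal_map_const_mul (μ := 0) (v := 1) ((-1 : ℝ) ^ (i : ℕ))
    have hc2 : ((-1 : ℝ) ^ (i : ℕ)) ^ 2 = 1 := by
      rw [← pow_mul, mul_comm, pow_mul]; norm_num
    have hv : (⟨((-1 : ℝ) ^ (i : ℕ)) ^ 2, sq_nonneg _⟩ : NNReal) * 1 = 1 := by
      ext; simp [hc2]
    rw [mul_zero] at h
    rw [h]; congr 1
  exact measurePreserving_pi _ _ hcoord

end Stmt7

open Stmt7 in
/-- For a random real polynomial of degree `n ≥ 1` with i.i.d. standard normal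
coefficients, `P(N⁻(Q) = k) = P(N⁻(Q) = n - k)` for every `0 ≤ k ≤ n`. -/
theorem stmt_7 (n : ℕ) (hn : 1 ≤ n) (k : ℕ) (hk : k ≤ n) :
    (Measure.pi fun _ : Fin (n + 1) => gaussianReal 0 1)
        {ω | negRootCount (polyOfCoeffs ω) = k}
      = (Measure.pi fun _ : Fin (n + 1) => gaussianReal 0 1)
        {ω | negRootCount (polyOfCoeffs ω) = n - k} := by
  classical
  set μ := (Measure.pi fun _ : Fin (n + 1) => gaussianReal 0 1) with hμ
  set Bad := {ω : Fin (n + 1) → ℝ | ω (Fin.last n) = 0}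
      ∪ {ω : Fin (n + 1) → ℝ | ∃ z : ℂ, z.re = 0
          ∧ ((polyOfCoeffs ω).map (algebraMap ℝ ℂ)).eval z = 0} with hBad
  have hBadnull : μ Bad = 0 :=
    measure_union_null (coord_null (n + 1) (Fin.last n) 0) (bad_null hn)
  have hgood : ∀ ω ∉ Bad,
      negRootCount (polyOfCoeffs fun i : Fin (n + 1) => (-1 : ℝ) ^ (i : ℕ) * ω i)
          = n - negRootCount (polyOfCoeffs ω)
        ∧ negRootCount (polyOfCoeffs ω) ≤ n := by
    intro ω hω
    rw [hBad, Set.mem_union] at hω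
    push_neg at hω
    obtain ⟨h1, h2⟩ := hω
    simp only [Set.mem_setOf_eq] at h1 h2
    push_neg at h2
    refine key ω h1 fun z hz hre => ?_
    rcases Polynomial.mem_roots'.mp hz with ⟨_, hz0⟩
    exact h2 z hre hz0
  have hb : ∀ᵐ ω ∂μ, ω ∉ Bad := by
    rw [ae_iff]
    simpa [Classical.not_not] using hBadnull
  have hae : {ω : Fin (n + 1) → ℝ |
        negRootCount (polyOfCoeffs fun i : Fin (n + 1) => (-1 : ℝ) ^ (i : ℕ) * ω i) = n - k}
      =ᵐ[μ] {ω : Fin (n + 1) → ℝ | negRootCount (polyOfCoeffs ω) = k} := by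
    rw [Filter.eventuallyEq_set]
    filter_upwards [hb] with ω hω
    obtain ⟨hkey, hle⟩ := hgood ω hω
    simp only [Set.mem_setOf_eq, hkey]
    omega
  have hstep : μ {ω | negRootCount (polyOfCoeffs ω) = k}
      = μ {ω : Fin (n + 1) → ℝ |
          negRootCount (polyOfCoeffs fun i : Fin (n + 1) => (-1 : ℝ) ^ (i : ℕ) * ω i) = n - k} :=
    (measure_congr hae).symm
  rw [hstep]
  have hpre : {ω : Fin (n + 1) → ℝ |
        negRootCount (polyOfCoeffs fun i : Fin (n + 1) => (-1 : ℝ) ^ (i : ℕ) * ω i) = n - k}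
      = (sgnEquiv (n := n)) ⁻¹' {ω | negRootCount (polyOfCoeffs ω) = n - k} := rfl
  rw [hpre]
  exact sgn_mp.measure_preimage_equiv _
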